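/- (Safe screening preserves the optimum) Fix γ ∈ (0,1], λ > 0, a finite index set T, and symmetric matrices H_t ∈ ℝ^{d×d} (t ∈ T). Let M* be optimal for λ, i.e., M* ⪰ O and P_λ(M*) ≤ P_λ(M) for all M ⪰ O. Let L̂ ⊆ {t ∈ T : ⟨M*, H_t⟩ < 1−γ} and R̂ ⊆ {t ∈ T : ⟨M*, H_t⟩ > 1}, and define the reduced objective P̃_λ(M) := Σ_{t ∈ T∖(L̂∪R̂)} ℓ_γ(⟨M, H_t⟩) + (λ/2)‖M‖_F² + (1 − γ/2)|L̂| − ⟨M, Σ_{t ∈ L̂} H_t⟩. Then M* also minimizes P̃_λ over positive semi-definite matrices, and P̃_λ(M*) = P_λ(M*). -/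

import Mathlib

open scoped BigOperators
open scoped Matrix

/-- Frobenius inner product ⟨A,B⟩ = tr(Aᵀ B). -/
noncomputable def frob {d : ℕ} (A B : Matrix (Fin d) (Fin d) ℝ) : ℝ :=
  Matrix.trace (Aᵀ * B)

/-- Frobenius norm ‖A‖_F = √⟨A,A⟩. -/
noncomputable def frobNorm {d : ℕ} (A : Matrix (Fin d) (Fin d) ℝ) : ℝ :=
  Real.sqrt (frob A A)

/-- Smoothed hinge loss ℓ_γ. -/
noncomputable def shinge (γ x : ℝ) : ℝ :=
  if 1 < x then 0 else if 1 - γ ≤ x then (1 - x) ^ 2 / (2 * γ) else 1 - x - γ / 2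

/-- Derivative of the smoothed hinge loss ℓ_γ'. -/
noncomputable def shinge' (γ x : ℝ) : ℝ :=
  if 1 < x then 0 else if 1 - γ ≤ x then -(1 - x) / γ else -1

/-- Primal objective P_λ(M) = Σ_t ℓ_γ(⟨M,H_t⟩) + (λ/2)‖M‖_F². -/
noncomputable def Pobj {d : ℕ} {ι : Type*} (γ lam : ℝ) (T : Finset ι)
    (H : ι → Matrix (Fin d) (Fin d) ℝ) (M : Matrix (Fin d) (Fin d) ℝ) : ℝ :=
  (∑ t ∈ T, shinge γ (frob M (H t))) + lam / 2 * frobNorm M ^ 2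

/-- Gradient ∇P_λ(M) = Σ_t ℓ_γ'(⟨M,H_t⟩) H_t + λ M. -/
noncomputable def gradP {d : ℕ} {ι : Type*} (γ lam : ℝ) (T : Finset ι)
    (H : ι → Matrix (Fin d) (Fin d) ℝ) (M : Matrix (Fin d) (Fin d) ℝ) :
    Matrix (Fin d) (Fin d) ℝ :=
  (∑ t ∈ T, shinge' γ (frob M (H t)) • H t) + lam • M

/- ### Auxiliary lemmas -/

lemma frob_eq_sum {d : ℕ} (A B : Matrix (Fin d) (Fin d) ℝ) :
    frob A B = ∑ i, ∑ j, A j i * B j i := by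
  simp [frob, Matrix.trace, Matrix.diag, Matrix.mul_apply, Matrix.transpose_apply]

lemma frob_self_nonneg {d : ℕ} (A : Matrix (Fin d) (Fin d) ℝ) : 0 ≤ frob A A := by
  rw [frob_eq_sum]
  exact Finset.sum_nonneg fun i _ => Finset.sum_nonneg fun j _ => mul_self_nonneg _

lemma frob_add_left {d : ℕ} (A B C : Matrix (Fin d) (Fin d) ℝ) :
    frob (A + B) C = frob A C + frob B C := by
  simp [frob_eq_sum, add_mul, Finset.sum_add_distrib]

lemma frob_smul_left {d : ℕ} (a : ℝ) (A C : Matrix (Fin d) (Fin d) ℝ) :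
    frob (a • A) C = a * frob A C := by
  simp [frob_eq_sum, Finset.mul_sum, mul_assoc]

lemma frob_comm {d : ℕ} (A B : Matrix (Fin d) (Fin d) ℝ) : frob A B = frob B A := by
  rw [frob_eq_sum, frob_eq_sum]
  exact Finset.sum_congr rfl fun i _ => Finset.sum_congr rfl fun j _ => mul_comm _ _

lemma frob_add_right {d : ℕ} (A B C : Matrix (Fin d) (Fin d) ℝ) :
    frob C (A + B) = frob C A + frob C B := by
  rw [frob_comm, frob_add_left, frob_comm A, frob_comm B]

lemma frob_smul_right {d : ℕ} (a : ℝ) (A C : Matrix (Fin d) (Fin d) ℝ) :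
    frob C (a • A) = a * frob C A := by
  rw [frob_comm, frob_smul_left, frob_comm]

lemma frob_zero_right {d : ℕ} (C : Matrix (Fin d) (Fin d) ℝ) : frob C 0 = 0 := by
  simp [frob_eq_sum]

lemma frob_sum_right {d : ℕ} {ι : Type*} [DecidableEq ι] (s : Finset ι)
    (M : Matrix (Fin d) (Fin d) ℝ) (H : ι → Matrix (Fin d) (Fin d) ℝ) :
    frob M (∑ t ∈ s, H t) = ∑ t ∈ s, frob M (H t) := by
  induction s using Finset.induction with
  | empty => simp [frob_zero_right]
  | insert _ _ hnot ih =>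
    rw [Finset.sum_insert hnot, Finset.sum_insert hnot, frob_add_right, ih]

lemma frob_sub_left {d : ℕ} (A B C : Matrix (Fin d) (Fin d) ℝ) :
    frob (A - B) C = frob A C - frob B C := by
  simp [frob_eq_sum, sub_mul, Finset.sum_sub_distrib]

lemma frob_sub_right {d : ℕ} (A B C : Matrix (Fin d) (Fin d) ℝ) :
    frob C (A - B) = frob C A - frob C B := by
  rw [frob_comm, frob_sub_left, frob_comm A, frob_comm B]

lemma frobNorm_sq {d : ℕ} (A : Matrix (Fin d) (Fin d) ℝ) :
    frobNorm A ^ 2 = frob A A :=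
  Real.sq_sqrt (frob_self_nonneg A)

lemma shinge_tangent {γ : ℝ} (hγ : 0 < γ) (a b : ℝ) :
    shinge γ a + shinge' γ a * (b - a) ≤ shinge γ b := by
  have t2 : (0:ℝ) < 2 * γ := by linarith
  have heq : (1 - a) ^ 2 / (2 * γ) + -(1 - a) / γ * (b - a)
      = ((1 - a) ^ 2 + 2 * (a - 1) * (b - a)) / (2 * γ) := by
    field_simp
    ring
  unfold shinge shinge'
  split_ifs <;>
  first
  | linarith
  | positivity
  | (rw [heq, div_le_div_iff₀ t2 t2]; nlinarith [sq_nonneg (a - b)])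
  | (rw [heq, div_le_iff₀ t2]
     nlinarith [sq_nonneg (1 - a),
       mul_nonneg (by linarith : (0:ℝ) ≤ 1 - a) (by linarith : (0:ℝ) ≤ b - 1)])
  | (rw [heq, div_le_iff₀ t2]
     nlinarith [mul_nonneg (by linarith : (0:ℝ) ≤ γ - (1 - a))
         (by linarith : (0:ℝ) ≤ 2 * (1 - b) - γ - (1 - a))])
  | (rw [le_div_iff₀ t2]; nlinarith [sq_nonneg (1 - b - γ)])

lemma shinge_of_lt {γ x : ℝ} (hγ : 0 < γ) (h : x < 1 - γ) : shinge γ x = 1 - x - γ / 2 := by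
  unfold shinge
  rw [if_neg (by linarith), if_neg (by linarith)]

lemma shinge_of_gt {γ x : ℝ} (h : 1 < x) : shinge γ x = 0 := by
  unfold shinge; rw [if_pos h]

lemma shinge_convex {γ : ℝ} (hγ : 0 < γ) {θ : ℝ} (hθ0 : 0 ≤ θ) (hθ1 : θ ≤ 1) (x y : ℝ) :
    shinge γ ((1 - θ) * x + θ * y) ≤ (1 - θ) * shinge γ x + θ * shinge γ y := by
  have h1 := shinge_tangent hγ ((1 - θ) * x + θ * y) x
  have h2 := shinge_tangent hγ ((1 - θ) * x + θ * y) y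
  nlinarith [h1, h2]

lemma posSemidef_combo {d : ℕ} {A B : Matrix (Fin d) (Fin d) ℝ}
    (hA : A.PosSemidef) (hB : B.PosSemidef) {a b : ℝ} (ha : 0 ≤ a) (hb : 0 ≤ b) :
    (a • A + b • B).PosSemidef := by
  rw [Matrix.posSemidef_iff_dotProduct_mulVec]
  constructor
  · have h1 : Aᴴ = A := hA.1
    have h2 : Bᴴ = B := hB.1
    show (a • A + b • B)ᴴ = _
    rw [Matrix.conjTranspose_add, Matrix.conjTranspose_smul, Matrix.conjTranspose_smul,
      h1, h2]
    simp
  · intro x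
    have e : (a • A + b • B) *ᵥ x = a • (A *ᵥ x) + b • (B *ᵥ x) := by
      rw [Matrix.add_mulVec, Matrix.smul_mulVec, Matrix.smul_mulVec]
    rw [e, dotProduct_add, dotProduct_smul, dotProduct_smul]
    simp only [smul_eq_mul]
    exact add_nonneg (mul_nonneg ha (by simpa using hA.dotProduct_mulVec_nonneg x)) (mul_nonneg hb (by simpa using hB.dotProduct_mulVec_nonneg x))

/-- Safe screening preserves the optimum. -/
theorem safe_screening_preserves_optimum {d : ℕ} {ι : Type*} [DecidableEq ι]
    (γ lam : ℝ) (hγ : 0 < γ) (hγ1 : γ ≤ 1) (hlam : 0 < lam)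
    (T Lhat Rhat : Finset ι) (H : ι → Matrix (Fin d) (Fin d) ℝ)
    (hH : ∀ t ∈ T, (H t).IsSymm)
    (Mstar : Matrix (Fin d) (Fin d) ℝ) (hMstar : Mstar.PosSemidef)
    (hopt : ∀ M : Matrix (Fin d) (Fin d) ℝ, M.PosSemidef →
      Pobj γ lam T H Mstar ≤ Pobj γ lam T H M)
    (hL : ∀ t ∈ Lhat, t ∈ T ∧ frob Mstar (H t) < 1 - γ)
    (hR : ∀ t ∈ Rhat, t ∈ T ∧ 1 < frob Mstar (H t)) :
    let Ptilde : Matrix (Fin d) (Fin d) ℝ → ℝ := fun M =>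
      (∑ t ∈ T \ (Lhat ∪ Rhat), shinge γ (frob M (H t))) + lam / 2 * frobNorm M ^ 2 +
        (1 - γ / 2) * (Lhat.card : ℝ) - frob M (∑ t ∈ Lhat, H t)
    (∀ M : Matrix (Fin d) (Fin d) ℝ, M.PosSemidef → Ptilde Mstar ≤ Ptilde M) ∧
      Ptilde Mstar = Pobj γ lam T H Mstar := by
  intro Ptilde
  have hdisj : Disjoint Lhat Rhat := by
    rw [Finset.disjoint_left]
    intro t htL htR
    have h1 := (hL t htL).2
    have h2 := (hR t htR).2
    linarith
  have hsub : Lhat ∪ Rhat ⊆ T :=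
    Finset.union_subset (fun t ht => (hL t ht).1) (fun t ht => (hR t ht).1)
  -- The reduced objective agrees with the full one whenever the screening conditions hold.
  have key : ∀ N : Matrix (Fin d) (Fin d) ℝ,
      (∀ t ∈ Lhat, frob N (H t) < 1 - γ) → (∀ t ∈ Rhat, 1 < frob N (H t)) →
      Ptilde N = Pobj γ lam T H N := by
    intro N hNL hNR
    have hsplit : (∑ t ∈ T \ (Lhat ∪ Rhat), shinge γ (frob N (H t)))
        + ∑ t ∈ Lhat ∪ Rhat, shinge γ (frob N (H t))
        = ∑ t ∈ T, shinge γ (frob N (H t)) :=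
      Finset.sum_sdiff hsub
    have hunion : ∑ t ∈ Lhat ∪ Rhat, shinge γ (frob N (H t))
        = (∑ t ∈ Lhat, shinge γ (frob N (H t))) + ∑ t ∈ Rhat, shinge γ (frob N (H t)) :=
      Finset.sum_union hdisj
    have hLsum : ∑ t ∈ Lhat, shinge γ (frob N (H t))
        = (1 - γ / 2) * (Lhat.card : ℝ) - ∑ t ∈ Lhat, frob N (H t) := by
      rw [Finset.sum_congr rfl (fun t ht => shinge_of_lt hγ (hNL t ht))]
      rw [show (fun t => 1 - frob N (H t) - γ / 2) = fun t => (1 - γ / 2) - frob N (H t) by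
        funext t; ring]
      rw [Finset.sum_sub_distrib, Finset.sum_const, nsmul_eq_mul, mul_comm]
    have hRsum : ∑ t ∈ Rhat, shinge γ (frob N (H t)) = 0 :=
      Finset.sum_eq_zero fun t ht => shinge_of_gt (hNR t ht)
    simp only [Ptilde, Pobj]
    rw [frob_sum_right]
    linarith [hsplit, hunion, hLsum, hRsum]
  have e1 : Ptilde Mstar = Pobj γ lam T H Mstar :=
    key Mstar (fun t ht => (hL t ht).2) (fun t ht => (hR t ht).2)
  refine ⟨?_, e1⟩
  intro M hM
  -- choose a small θ along the segment from Mstar to M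
  set xs : ι → ℝ := fun t => frob Mstar (H t) with hxs
  set ys : ι → ℝ := fun t => frob M (H t) with hys
  have hev : ∀ᶠ θ : ℝ in nhdsWithin 0 (Set.Ioi (0:ℝ)),
      ((∀ t ∈ Lhat, (1 - θ) * xs t + θ * ys t < 1 - γ) ∧
        (∀ t ∈ Rhat, 1 < (1 - θ) * xs t + θ * ys t)) ∧ θ < 1 := by
    have base : ∀ c : ℝ, Filter.Tendsto (fun θ : ℝ => (1 - θ) * c) (nhds 0) (nhds c) := by
      intro c
      have : Continuous fun θ : ℝ => (1 - θ) * c := by continuity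
      simpa using this.tendsto 0
    have base2 : ∀ x y : ℝ,
        Filter.Tendsto (fun θ : ℝ => (1 - θ) * x + θ * y) (nhds 0) (nhds x) := by
      intro x y
      have : Continuous fun θ : ℝ => (1 - θ) * x + θ * y := by continuity
      simpa using this.tendsto 0
    have h1 : ∀ᶠ θ : ℝ in nhds 0, ∀ t ∈ Lhat, (1 - θ) * xs t + θ * ys t < 1 - γ := by
      rw [Filter.eventually_all_finset]
      intro t ht
      exact (base2 (xs t) (ys t)).eventually_lt_const ((hL t ht).2)
    have h2 : ∀ᶠ θ : ℝ in nhds 0, ∀ t ∈ Rhat, 1 < (1 - θ) * xs t + θ * ys t := by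
      rw [Filter.eventually_all_finset]
      intro t ht
      exact (base2 (xs t) (ys t)).eventually_const_lt ((hR t ht).2)
    have h3 : ∀ᶠ θ : ℝ in nhds (0:ℝ), θ < 1 :=
      eventually_lt_nhds (by norm_num)
    exact (((h1.and h2).and h3)).filter_mono nhdsWithin_le_nhds
  obtain ⟨θ, ⟨⟨hθL, hθR⟩, hθ1⟩, hθpos⟩ :=
    (hev.and (eventually_mem_nhdsWithin)).exists
  rw [Set.mem_Ioi] at hθpos
  set N := (1 - θ) • Mstar + θ • M with hN
  have hNpsd : N.PosSemidef := posSemidef_combo hMstar hM (by linarith) (by linarith)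
  have hfrobN : ∀ A : Matrix (Fin d) (Fin d) ℝ,
      frob N A = (1 - θ) * frob Mstar A + θ * frob M A := by
    intro A
    rw [hN, frob_add_left, frob_smul_left, frob_smul_left]
  have e2 : Ptilde N = Pobj γ lam T H N := by
    refine key N (fun t ht => ?_) (fun t ht => ?_)
    · rw [hfrobN]; exact hθL t ht
    · rw [hfrobN]; exact hθR t ht
  have h3 : Pobj γ lam T H Mstar ≤ Pobj γ lam T H N := hopt N hNpsd
  -- convexity of the reduced objective
  have hsum : (∑ t ∈ T \ (Lhat ∪ Rhat), shinge γ (frob N (H t)))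
      ≤ (1 - θ) * (∑ t ∈ T \ (Lhat ∪ Rhat), shinge γ (frob Mstar (H t)))
        + θ * ∑ t ∈ T \ (Lhat ∪ Rhat), shinge γ (frob M (H t)) := by
    rw [Finset.mul_sum, Finset.mul_sum, ← Finset.sum_add_distrib]
    refine Finset.sum_le_sum fun t _ => ?_
    rw [hfrobN]
    exact shinge_convex hγ (by linarith) (by linarith) _ _
  have hnorm : frobNorm N ^ 2 ≤ (1 - θ) * frobNorm Mstar ^ 2 + θ * frobNorm M ^ 2 := by
    rw [frobNorm_sq, frobNorm_sq, frobNorm_sq]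
    have hq : frob N N = (1 - θ) * ((1 - θ) * frob Mstar Mstar + θ * frob Mstar M)
        + θ * ((1 - θ) * frob M Mstar + θ * frob M M) := by
      rw [hfrobN N, hN, frob_add_right, frob_smul_right, frob_smul_right,
        frob_add_right, frob_smul_right, frob_smul_right]
    have hd : 0 ≤ frob Mstar Mstar - frob Mstar M - frob M Mstar + frob M M := by
      have := frob_self_nonneg (Mstar - M)
      rw [frob_sub_left, frob_sub_right, frob_sub_right] at this
      linarith
    nlinarith [mul_nonneg hθpos.le (by linarith : (0:ℝ) ≤ 1 - θ)]
  have hlin : frob N (∑ t ∈ Lhat, H t)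
      = (1 - θ) * frob Mstar (∑ t ∈ Lhat, H t) + θ * frob M (∑ t ∈ Lhat, H t) :=
    hfrobN _
  have hconv : Ptilde N ≤ (1 - θ) * Ptilde Mstar + θ * Ptilde M := by
    simp only [Ptilde]
    nlinarith [hsum, hnorm, hlin]
  have hchain : Ptilde Mstar ≤ (1 - θ) * Ptilde Mstar + θ * Ptilde M := by
    calc Ptilde Mstar = Pobj γ lam T H Mstar := e1
    _ ≤ Pobj γ lam T H N := h3
    _ = Ptilde N := e2.symm
    _ ≤ _ := hconv
  have : θ * Ptilde Mstar ≤ θ * Ptilde M := by linarith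
  exact le_of_mul_le_mul_left this hθpos
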